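/- Let ∇_M : W^{1,2}(M,ω₀) ⊂ L²(M,ω₀) → L²(TM,ω₀) be the weighted gradient on a closed Riemannian manifold M with ω₀ ∈ A₂(M), and div_{M,ω₀} = −(∇_M)* its negative adjoint. If ∇_M has a compact left Fredholm inverse (so Ran(∇_M) is closed), then the operator D₀ = [[0, div_{M,ω₀}],[−∇_M, 0]] on L²(M,ω₀) ⊕ L²(TM,ω₀) has closed range H = Ran(div_{M,ω₀}) ⊕ Ran(∇_M), and the restriction of D₀ to H has a compact inverse D₀^{-1} : H → H. -/

import Mathlib

open MeasureTheory Set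
noncomputable section
set_option maxHeartbeats 1000000
set_option linter.deprecated false
set_option linter.unusedVariables false
set_option linter.dupNamespace false

section GBOCIAuxiliary
open Metric NNReal

local notation "⟪" x ", " y "⟫" => @inner ℂ _ _ x y


/-- A continuous linear map with finite dimensional range is a compact operator. -/
theorem aux_fr_compact {E F : Type*} [NormedAddCommGroup E] [NormedSpace ℂ E]
    [NormedAddCommGroup F] [NormedSpace ℂ F] (f : E →L[ℂ] F)
    (h : FiniteDimensional ℂ (LinearMap.range (f : E →ₗ[ℂ] F))) : IsCompactOperator ⇑f := by
  set V := LinearMap.range (f : E →ₗ[ℂ] F) with hV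
  haveI : FiniteDimensional ℂ V := h
  refine ⟨Subtype.val '' Metric.closedBall (0 : V) ‖f‖, ?_, ?_⟩
  · exact (isCompact_closedBall _ _).image continuous_subtype_val
  · refine Filter.mem_of_superset (Metric.closedBall_mem_nhds 0 one_pos) ?_
    intro x hx
    refine ⟨⟨f x, LinearMap.mem_range_self _ x⟩, ?_, rfl⟩
    rw [Metric.mem_closedBall, dist_zero_right]
    show ‖f x‖ ≤ ‖f‖
    calc ‖f x‖ ≤ ‖f‖ * ‖x‖ := f.le_opNorm x
      _ ≤ ‖f‖ * 1 := by
          have hx1 : ‖x‖ ≤ 1 := by simpa [dist_zero_right] using Metric.mem_closedBall.mp hx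
          exact mul_le_mul_of_nonneg_left hx1 (norm_nonneg _)
      _ = ‖f‖ := mul_one _

/-- The sum of a closed submodule and a finite dimensional submodule is closed. -/
theorem aux_sup_closed {E : Type*} [NormedAddCommGroup E] [NormedSpace ℂ E]
    (p q : Submodule ℂ E) (hp : IsClosed (p : Set E)) [FiniteDimensional ℂ q] :
    IsClosed ((p ⊔ q : Submodule ℂ E) : Set E) := by
  haveI : IsClosed (p : Set E) := hp
  have hcont : Continuous p.mkQ := continuous_quot_mk
  have hmap : ((p ⊔ q : Submodule ℂ E) : Set E) = ⇑p.mkQ ⁻¹' (q.map p.mkQ) := by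
    rw [← Submodule.comap_map_mkQ]
    rfl
  rw [hmap]
  exact ((q.map p.mkQ).closed_of_finiteDimensional).preimage hcont





/-- Schauder's theorem in Hilbert spaces: the adjoint of a compact operator is compact. -/
theorem aux_adjoint_compact {E F : Type*} [NormedAddCommGroup E] [InnerProductSpace ℂ E]
    [CompleteSpace E] [NormedAddCommGroup F] [InnerProductSpace ℂ F] [CompleteSpace F]
    (A : E →L[ℂ] F) (hA : IsCompactOperator ⇑A) :
    IsCompactOperator ⇑(ContinuousLinearMap.adjoint A) := by
  set B := ContinuousLinearMap.adjoint A with hB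
  have hAB : IsCompactOperator ⇑((A.comp B : F →ₗ[ℂ] F)) := by
    simpa using hA.comp_clm B
  have hg : IsCompact (closure (⇑(A.comp B) '' Metric.closedBall 0 1)) := by
    exact hAB.isCompact_closure_image_closedBall (𝕜₁ := ℂ) 1
  have htb2 : TotallyBounded (⇑(A.comp B) '' Metric.closedBall 0 1) :=
    hg.totallyBounded.subset subset_closure
  have htb : TotallyBounded (⇑B '' Metric.closedBall 0 1) := by
    rw [Metric.totallyBounded_iff]
    intro ε hε
    set δ : ℝ := ε ^ 2 / 4 with hδdef
    have hδ : 0 < δ := by positivity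
    obtain ⟨t, hts, htf, htc⟩ := totallyBounded_iff_subset.mp htb2 _ (Metric.dist_mem_uniformity hδ)
    choose! x hx1 hx2 using fun y (hy : y ∈ t) => hts hy
    refine ⟨(fun y => B (x y)) '' t, htf.image _, ?_⟩
    rintro z ⟨w, hw, rfl⟩
    obtain ⟨y, hy, hdy⟩ := Set.mem_iUnion₂.mp (htc ⟨w, hw, rfl⟩)
    have hdy' : dist (A.comp B w) y < δ := hdy
    simp only [Set.mem_iUnion₂, Metric.mem_ball]
    refine ⟨B (x y), ⟨y, hy, rfl⟩, ?_⟩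
    obtain ⟨hxball, hxeq⟩ := And.intro (hx1 y hy) (hx2 y hy)
    set u := w - x y with hu
    have hun : ‖u‖ ≤ 2 := by
      have h1 : ‖w‖ ≤ 1 := by simpa [dist_zero_right] using Metric.mem_closedBall.mp hw
      have h2 : ‖x y‖ ≤ 1 := by simpa [dist_zero_right] using Metric.mem_closedBall.mp hxball
      calc ‖u‖ ≤ ‖w‖ + ‖x y‖ := norm_sub_le _ _
        _ ≤ 2 := by linarith
    have hABu : ‖A (B u)‖ < δ := by
      have h0 : A (B u) = (A.comp B) w - (A.comp B) (x y) := by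
        simp [hu, map_sub]
      rw [hxeq] at h0
      rw [h0, ← dist_eq_norm]
      exact hdy'
    have hsq : ‖B u‖ ^ 2 ≤ 2 * δ := by
      have h1 : (‖B u‖ : ℝ) ^ 2 = RCLike.re ⟪B u, B u⟫ := by
        rw [inner_self_eq_norm_sq]
      have h2 : ⟪B u, B u⟫ = ⟪u, A (B u)⟫ := ContinuousLinearMap.adjoint_inner_left A (B u) u
      have h3 : RCLike.re ⟪u, A (B u)⟫ ≤ ‖⟪u, A (B u)⟫‖ := RCLike.re_le_norm _
      have h4 : ‖⟪u, A (B u)⟫‖ ≤ ‖u‖ * ‖A (B u)‖ := norm_inner_le_norm _ _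
      have h5 : ‖u‖ * ‖A (B u)‖ ≤ 2 * δ := by
        have := norm_nonneg (A (B u))
        nlinarith
      rw [h1, h2]; linarith
    have hlt : ‖B u‖ ^ 2 < ε ^ 2 := by
      have : 2 * δ = ε ^ 2 / 2 := by rw [hδdef]; ring
      rw [this] at hsq
      nlinarith
    have : ‖B u‖ < ε := lt_of_pow_lt_pow_left₀ 2 hε.le hlt
    calc dist (B w) (B (x y)) = ‖B u‖ := by rw [dist_eq_norm, hu, map_sub]
      _ < ε := this
  have key : IsCompact (closure (⇑B '' Metric.closedBall 0 1)) :=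
    TotallyBounded.isCompact_of_isClosed htb.closure isClosed_closure
  exact (isCompactOperator_iff_isCompact_closure_image_closedBall (𝕜₁ := ℂ)
    (B : F →ₗ[ℂ] E) zero_lt_one).mpr (by simpa using key)



namespace GBOCIAux



variable {H₁ H₂ : Type*} [NormedAddCommGroup H₁] [InnerProductSpace ℂ H₁]
  [NormedAddCommGroup H₂] [InnerProductSpace ℂ H₂]

/-- The graph of `S` inside the Hilbert space `WithLp 2 (H₁ × H₂)`. -/
def Gr (S : H₁ →ₗ.[ℂ] H₂) : Submodule ℂ (WithLp 2 (H₁ × H₂)) :=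
  S.graph.comap ((WithLp.prodContinuousLinearEquiv 2 ℂ H₁ H₂).toLinearEquiv :
    WithLp 2 (H₁ × H₂) →ₗ[ℂ] H₁ × H₂)

variable (S : H₁ →ₗ.[ℂ] H₂)

theorem isClosed_Gr (hclosed : IsClosed (S.graph : Set (H₁ × H₂))) :
    IsClosed ((Gr S : Submodule ℂ (WithLp 2 (H₁ × H₂))) : Set (WithLp 2 (H₁ × H₂))) := by
  have : ((Gr S : Submodule ℂ (WithLp 2 (H₁ × H₂))) : Set (WithLp 2 (H₁ × H₂)))
      = ⇑(WithLp.prodContinuousLinearEquiv 2 ℂ H₁ H₂) ⁻¹' (S.graph : Set (H₁ × H₂)) := rfl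
  rw [this]
  exact hclosed.preimage (WithLp.prodContinuousLinearEquiv 2 ℂ H₁ H₂).continuous

/-- First coordinate projection. -/
def p1 : (Gr S) →L[ℂ] H₁ :=
  (ContinuousLinearMap.fst ℂ H₁ H₂).comp
    (((WithLp.prodContinuousLinearEquiv 2 ℂ H₁ H₂) : WithLp 2 (H₁ × H₂) →L[ℂ] H₁ × H₂).comp
      (Gr S).subtypeL)

/-- Second coordinate projection. -/
def p2 : (Gr S) →L[ℂ] H₂ :=
  (ContinuousLinearMap.snd ℂ H₁ H₂).comp
    (((WithLp.prodContinuousLinearEquiv 2 ℂ H₁ H₂) : WithLp 2 (H₁ × H₂) →L[ℂ] H₁ × H₂).comp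
      (Gr S).subtypeL)

theorem exists_dom (g : Gr S) : ∃ u : S.domain, (u : H₁) = p1 S g ∧ S u = p2 S g := by
  have hg : (WithLp.prodContinuousLinearEquiv 2 ℂ H₁ H₂) (g : WithLp 2 (H₁ × H₂)) ∈ S.graph := g.2
  obtain ⟨u, hu1, hu2⟩ := S.mem_graph_iff.mp hg
  exact ⟨u, hu1, hu2⟩

theorem exists_mk (u : S.domain) : ∃ g : Gr S, p1 S g = (u : H₁) ∧ p2 S g = S u := by
  set ι := WithLp.prodContinuousLinearEquiv 2 ℂ H₁ H₂ with hι
  refine ⟨⟨ι.symm ((u : H₁), S u), ?_⟩, ?_, ?_⟩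
  · show ι (ι.symm ((u : H₁), S u)) ∈ S.graph
    rw [ι.apply_symm_apply]
    exact S.mem_graph u
  · show (ι (ι.symm ((u : H₁), S u))).1 = (u : H₁)
    rw [ι.apply_symm_apply]
  · show (ι (ι.symm ((u : H₁), S u))).2 = S u
    rw [ι.apply_symm_apply]

theorem inner_Gr (g h : Gr S) : (inner ℂ g h : ℂ) = ⟪p1 S g, p1 S h⟫ + ⟪p2 S g, p2 S h⟫ := rfl

theorem norm_Gr (g : Gr S) : ‖g‖ ≤ ‖p1 S g‖ + ‖p2 S g‖ := by
  have hfst : ((g : WithLp 2 (H₁ × H₂)).fst : H₁) = p1 S g := rfl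
  have hsnd : ((g : WithLp 2 (H₁ × H₂)).snd : H₂) = p2 S g := rfl
  have h2 : ‖(g : WithLp 2 (H₁ × H₂))‖ ^ 2
      = ‖(g : WithLp 2 (H₁ × H₂)).fst‖ ^ 2 + ‖(g : WithLp 2 (H₁ × H₂)).snd‖ ^ 2 :=
    WithLp.prod_norm_sq_eq_of_L2 _
  rw [hfst, hsnd] at h2
  have : ‖g‖ = ‖(g : WithLp 2 (H₁ × H₂))‖ := rfl
  rw [this]
  nlinarith [norm_nonneg (p1 S g), norm_nonneg (p2 S g), norm_nonneg (g : WithLp 2 (H₁ × H₂))]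

end GBOCIAux

theorem core_gboci {H₁ H₂ G : Type*} [NormedAddCommGroup H₁] [InnerProductSpace ℂ H₁] [CompleteSpace H₁]
    [NormedAddCommGroup H₂] [InnerProductSpace ℂ H₂] [CompleteSpace H₂]
    [NormedAddCommGroup G] [InnerProductSpace ℂ G] [CompleteSpace G]
    (S : H₁ →ₗ.[ℂ] H₂) (hdense : Dense (S.domain : Set H₁))
    (π₁ : G →L[ℂ] H₁) (π₂ : G →L[ℂ] H₂)
    (hinner : ∀ g h : G, (inner ℂ g h : ℂ) = ⟪π₁ g, π₁ h⟫ + ⟪π₂ g, π₂ h⟫)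
    (hnorm : ∀ g : G, ‖g‖ ≤ ‖π₁ g‖ + ‖π₂ g‖)
    (hdom : ∀ g : G, ∃ u : S.domain, (u : H₁) = π₁ g ∧ S u = π₂ g)
    (hmk : ∀ u : S.domain, ∃ g : G, π₁ g = (u : H₁) ∧ π₂ g = S u)
    (T : H₂ →L[ℂ] H₁) (F : H₁ →L[ℂ] H₁) (hTc : IsCompactOperator (⇑T))
    (hFfd : FiniteDimensional ℂ (LinearMap.range (F : H₁ →ₗ[ℂ] H₁)))
    (hTS : ∀ x : S.domain, T (S x) = (x : H₁) + F x) :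
    IsClosed ((LinearMap.range S.toFun : Submodule ℂ H₂) : Set H₂) ∧
    IsClosed ((LinearMap.range (S.adjoint).toFun : Submodule ℂ H₁) : Set H₁) ∧
    ∃ R : H₁ × H₂ →L[ℂ] H₁ × H₂, IsCompactOperator (⇑R) ∧
      ∀ (u : S.domain) (v : (S.adjoint).domain),
        (u : H₁) ∈ LinearMap.range (S.adjoint).toFun →
        (v : H₂) ∈ LinearMap.range S.toFun →
        R (-(S.adjoint v), -(S u)) = ((u : H₁), (v : H₂)) := by
  have hkey : ∀ g : G, T (π₂ g) = π₁ g + F (π₁ g) := by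
    intro g
    obtain ⟨u, hu1, hu2⟩ := hdom g
    rw [← hu1, ← hu2]
    exact hTS u
  -- the finite rank operator C on G and its kernel W
  set C : G →L[ℂ] H₁ := F.comp π₁ with hC
  set W : Submodule ℂ G := LinearMap.ker ((C : G →ₗ[ℂ] H₁)) with hW
  have hWclosed : IsClosed (W : Set G) := by
    have : (W : Set G) = ⇑C ⁻¹' {0} := rfl
    rw [this]; exact isClosed_singleton.preimage C.continuous
  haveI : CompleteSpace W := hWclosed.completeSpace_coe
  -- π₂ is bounded below on W
  set φ : W →L[ℂ] H₂ := π₂.comp W.subtypeL with hφ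
  have hbdd : ∀ w : W, ‖w‖ ≤ (‖T‖ + 1) * ‖φ w‖ := by
    intro w
    have hCw : F (π₁ (w : G)) = 0 := w.2
    have h1 : π₁ (w : G) = T (π₂ (w : G)) := by
      have := hkey (w : G); rw [hCw, add_zero] at this; exact this.symm
    have h2 : ‖(w : G)‖ ≤ ‖π₁ (w : G)‖ + ‖π₂ (w : G)‖ := hnorm _
    have h3 : ‖π₁ (w : G)‖ ≤ ‖T‖ * ‖π₂ (w : G)‖ := by rw [h1]; exact T.le_opNorm _
    have h4 : ‖w‖ = ‖(w : G)‖ := rfl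
    have h5 : φ w = π₂ (w : G) := rfl
    rw [h4, h5]
    have hTn : (0:ℝ) ≤ ‖T‖ := norm_nonneg T
    have hpn : (0:ℝ) ≤ ‖π₂ (w : G)‖ := norm_nonneg _
    nlinarith
  have hφanti : AntilipschitzWith (‖T‖ + 1).toNNReal φ := by
    refine ContinuousLinearMap.antilipschitz_of_bound φ ?_
    intro w
    rw [Real.coe_toNNReal _ (by positivity : (0:ℝ) ≤ ‖T‖ + 1)]
    exact hbdd w
  have hφrange : IsClosed (Set.range ⇑φ) := hφanti.isClosed_range φ.uniformContinuous
  -- Wᗮ is finite dimensional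
  haveI : FiniteDimensional ℂ (LinearMap.range ((C : G →ₗ[ℂ] H₁))) := by
    refine Submodule.finiteDimensional_of_le (S₂ := LinearMap.range (F : H₁ →ₗ[ℂ] H₁)) ?_
    rw [hC]
    exact LinearMap.range_comp_le_range (π₁ : G →ₗ[ℂ] H₁) (F : H₁ →ₗ[ℂ] H₁)
  haveI hfdq : FiniteDimensional ℂ (G ⧸ W) :=
    Module.Finite.equiv (LinearMap.quotKerEquivRange ((C : G →ₗ[ℂ] H₁))).symm
  haveI hfdWo : FiniteDimensional ℂ (↥Wᗮ) :=
    Module.Finite.equiv (Submodule.quotientEquivOfIsCompl W Wᗮ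
      W.isCompl_orthogonal)
  -- the range of π₂ is closed
  set Rng : Submodule ℂ H₂ := LinearMap.range ((π₂ : G →ₗ[ℂ] H₂)) with hRng
  have hRngdecomp : Rng = (W.map ((π₂ : G →ₗ[ℂ] H₂))) ⊔ (Wᗮ.map ((π₂ : G →ₗ[ℂ] H₂))) := by
    rw [← Submodule.map_sup,
      W.isCompl_orthogonal.sup_eq_top, hRng,
      LinearMap.range_eq_map]
  have hmapW : ((W.map ((π₂ : G →ₗ[ℂ] H₂))) : Set H₂) = Set.range ⇑φ := by
    ext y
    simp only [SetLike.mem_coe, Submodule.mem_map, Set.mem_range]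
    constructor
    · rintro ⟨g, hg, rfl⟩
      exact ⟨⟨g, hg⟩, rfl⟩
    · rintro ⟨w, rfl⟩
      exact ⟨(w : G), w.2, rfl⟩
  have hmapWclosed : IsClosed ((W.map ((π₂ : G →ₗ[ℂ] H₂))) : Set H₂) := by
    rw [hmapW]; exact hφrange
  have hRngClosed : IsClosed (Rng : Set H₂) := by
    rw [hRngdecomp]
    exact aux_sup_closed _ _ hmapWclosed
  -- identification of Rng with the range of S
  have hrangeS : LinearMap.range S.toFun = Rng := by
    ext y
    simp only [LinearMap.mem_range]
    constructor
    · rintro ⟨u, rfl⟩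
      obtain ⟨g, hg1, hg2⟩ := hmk u
      exact ⟨g, hg2⟩
    · rintro ⟨g, rfl⟩
      obtain ⟨u, hu1, hu2⟩ := hdom g
      exact ⟨u, hu2⟩
  have conclusion1 : IsClosed ((LinearMap.range S.toFun : Submodule ℂ H₂) : Set H₂) := by
    rw [hrangeS]; exact hRngClosed
  haveI : CompleteSpace Rng := hRngClosed.completeSpace_coe
  -- kernel of π₂ and its orthogonal complement
  set K : Submodule ℂ G := LinearMap.ker ((π₂ : G →ₗ[ℂ] H₂)) with hK
  have hKclosed : IsClosed (K : Set G) := by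
    have : (K : Set G) = ⇑π₂ ⁻¹' {0} := rfl
    rw [this]; exact isClosed_singleton.preimage π₂.continuous
  haveI : CompleteSpace K := hKclosed.completeSpace_coe
  haveI : CompleteSpace (↥Kᗮ) := K.isClosed_orthogonal.completeSpace_coe
  -- the bijection from Kᗮ to Rng
  set Ψ : (↥Kᗮ) →L[ℂ] (↥Rng) := (π₂.comp Kᗮ.subtypeL).codRestrict Rng
    (fun x => ⟨(x : G), rfl⟩) with hΨ
  have hΨapp : ∀ x : ↥Kᗮ, ((Ψ x : H₂)) = π₂ (x : G) := fun x => rfl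
  have hΨinj : Ψ.ker = ⊥ := by
    rw [LinearMap.ker_eq_bot']
    intro x hx
    have h0 : π₂ (x : G) = 0 := by
      have := congrArg (Subtype.val) hx
      simpa [hΨapp] using this
    have hxK : (x : G) ∈ K := h0
    have := x.2
    rw [Submodule.mem_orthogonal] at this
    have hzero : ⟪(x : G), (x : G)⟫ = 0 := this (x : G) hxK
    have : (x : G) = 0 := inner_self_eq_zero.mp hzero
    exact Subtype.ext this
  have hΨsurj : Ψ.range = ⊤ := by
    rw [LinearMap.range_eq_top]
    rintro ⟨y, hy⟩
    obtain ⟨g, hg⟩ := hy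
    refine ⟨⟨g - (K.orthogonalProjectionOnto g : G), K.sub_starProjection_mem_orthogonal g⟩, ?_⟩
    apply Subtype.ext
    have hker : π₂ ((K.orthogonalProjectionOnto g : G)) = 0 := (K.orthogonalProjectionOnto g).2
    show π₂ (g - (K.orthogonalProjectionOnto g : G)) = y
    rw [map_sub, hker, sub_zero]
    exact hg
  set e : (↥Kᗮ) ≃L[ℂ] (↥Rng) := ContinuousLinearEquiv.ofBijective Ψ hΨinj hΨsurj with he
  have he_apply : ∀ x : ↥Kᗮ, e x = Ψ x := fun x => rfl
  set P : H₂ →L[ℂ] Rng := Rng.orthogonalProjectionOnto with hP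
  set A : H₂ →L[ℂ] H₁ :=
    π₁.comp (Kᗮ.subtypeL.comp ((e.symm : (↥Rng) →L[ℂ] (↥Kᗮ)).comp P)) with hA
  -- basic structure of A
  have hA0 : ∀ y : H₂, A y = π₁ ((e.symm (P y) : G)) ∧ π₂ ((e.symm (P y) : G)) = ((P y : H₂)) := by
    intro y
    constructor
    · rfl
    · have h1 : e (e.symm (P y)) = P y := e.apply_symm_apply _
      have h2 : Ψ (e.symm (P y)) = P y := by rw [← he_apply]; exact h1
      have := congrArg Subtype.val h2
      rw [hΨapp] at this
      exact this
  have hPself : ∀ y : H₂, y ∈ Rng → ((P y : H₂)) = y := by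
    intro y hy
    have := Submodule.orthogonalProjectionOnto_mem_subspace_eq_self (K := Rng) ⟨y, hy⟩
    exact congrArg Subtype.val this
  -- the kernel of S inside H₁
  set K₁ : Submodule ℂ H₁ := (LinearMap.ker S.toFun).map S.domain.subtype with hK₁
  have hK₁mem : ∀ x : H₁, x ∈ K₁ ↔ ∃ w : S.domain, S w = 0 ∧ (w : H₁) = x := by
    intro x
    simp only [hK₁, Submodule.mem_map, LinearMap.mem_ker, Submodule.coe_subtype]
    constructor
    · rintro ⟨w, hw1, hw2⟩; exact ⟨w, hw1, hw2⟩
    · rintro ⟨w, hw1, hw2⟩; exact ⟨w, hw1, hw2⟩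
  -- membership of kernel elements in K
  have hK₁K : ∀ x ∈ K₁, ∃ g : G, g ∈ K ∧ π₁ g = x := by
    intro x hx
    obtain ⟨w, hw1, hw2⟩ := (hK₁mem x).mp hx
    obtain ⟨g, hg1, hg2⟩ := hmk w
    refine ⟨g, ?_, by rw [hg1, hw2]⟩
    show π₂ g = 0
    rw [hg2, hw1]
  -- A y is always orthogonal to K₁ and in the domain ambient part
  have hAorth : ∀ y : H₂, ∀ x ∈ K₁, ⟪x, A y⟫ = 0 := by
    intro y x hx
    obtain ⟨g, hgK, hgx⟩ := hK₁K x hx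
    obtain ⟨hA1, hA2⟩ := hA0 y
    set g' : ↥Kᗮ := e.symm (P y) with hg'
    have hginner : ⟪g, (g' : G)⟫ = 0 := by
      have := (g' : G) ∈ Kᗮ
      have h2 := g'.2
      rw [Submodule.mem_orthogonal] at h2
      exact h2 g hgK
    have hπ₂g : π₂ g = 0 := hgK
    have := hinner g (g' : G)
    rw [hπ₂g, inner_zero_left, add_zero, hgx] at this
    rw [hA1, ← this, hginner]
  -- the defect of A on the range of S lies in K₁
  have hASu : ∀ u : S.domain, (u : H₁) - A (S u) ∈ K₁ := by
    intro u
    obtain ⟨g, hg1, hg2⟩ := hmk u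
    have hSuRng : S u ∈ Rng := ⟨g, hg2⟩
    obtain ⟨hA1, hA2⟩ := hA0 (S u)
    rw [hPself _ hSuRng] at hA2
    set g' : ↥Kᗮ := e.symm (P (S u)) with hg'
    have hd : π₂ (g - (g' : G)) = 0 := by rw [map_sub, hg2, hA2, sub_self]
    obtain ⟨w, hw1, hw2⟩ := hdom (g - (g' : G))
    rw [hd] at hw2
    refine (hK₁mem _).mpr ⟨w, hw2, ?_⟩
    rw [hw1, map_sub, hg1, ← hA1]
  -- A is a genuine left inverse on vectors orthogonal to the kernel
  have hAinv : ∀ u : S.domain, ((u : H₁) ∈ K₁ᗮ) → A (S u) = (u : H₁) := by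
    intro u hu
    set w := (u : H₁) - A (S u) with hw
    have hwK₁ : w ∈ K₁ := hASu u
    have h1 : ⟪w, (u : H₁)⟫ = 0 := by
      rw [Submodule.mem_orthogonal] at hu
      exact hu w hwK₁
    have h2 : ⟪w, A (S u)⟫ = 0 := hAorth (S u) w hwK₁
    have h3 : ⟪w, w⟫ = 0 := by
      rw [hw, inner_sub_right, h1, h2, sub_zero]
    have := inner_self_eq_zero.mp h3
    rw [hw, sub_eq_zero] at this
    exact this.symm
  -- compactness of A
  have hAfix : ∀ y : H₂, A y = T ((P y : H₂)) - F (A y) := by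
    intro y
    obtain ⟨hA1, hA2⟩ := hA0 y
    have := hkey ((e.symm (P y) : G))
    rw [hA2, ← hA1] at this
    exact eq_sub_of_add_eq this.symm
  have hAc : IsCompactOperator ⇑A := by
    have heq : ⇑A = ⇑(T.comp (Rng.subtypeL.comp P) - F.comp A) := by
      funext y
      simp only [ContinuousLinearMap.coe_sub', Pi.sub_apply, ContinuousLinearMap.comp_apply]
      exact hAfix y
    rw [heq, ContinuousLinearMap.coe_sub']
    refine (hTc.comp_clm _).sub (aux_fr_compact (F.comp A) ?_)
    refine Submodule.finiteDimensional_of_le (S₂ := LinearMap.range (F : H₁ →ₗ[ℂ] H₁)) ?_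
    exact LinearMap.range_comp_le_range (A : H₂ →ₗ[ℂ] H₁) (F : H₁ →ₗ[ℂ] H₁)
  -- the adjoint of A
  set B : H₁ →L[ℂ] H₂ := ContinuousLinearMap.adjoint A with hB
  have hBc : IsCompactOperator ⇑B := aux_adjoint_compact A hAc
  have hadj := LinearPMap.adjoint_isFormalAdjoint hdense
  -- the range of the adjoint is contained in K₁ᗮ
  have hsub1 : ∀ x : H₁, x ∈ LinearMap.range S.adjoint.toFun → x ∈ K₁ᗮ := by
    rintro x ⟨v, rfl⟩
    rw [Submodule.mem_orthogonal]
    intro k hk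
    obtain ⟨w, hw1, hw2⟩ := (hK₁mem k).mp hk
    have h := hadj v w
    rw [hw1, inner_zero_right] at h
    have hk' : k = (w : H₁) := hw2.symm
    rw [hk', ← inner_conj_symm]
    have : S.adjoint.toFun v = S.adjoint v := rfl
    rw [this, h, map_zero]
  -- B maps K₁ᗮ into the adjoint domain
  have hBdom : ∀ x ∈ K₁ᗮ, ∀ u : S.domain, ⟪x, (u : H₁)⟫ = ⟪B x, S u⟫ := by
    intro x hx u
    have h1 : ⟪B x, S u⟫ = ⟪x, A (S u)⟫ := ContinuousLinearMap.adjoint_inner_left A (S u) x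
    have h2 : ⟪x, (u : H₁) - A (S u)⟫ = 0 := by
      rw [← inner_conj_symm]
      rw [Submodule.mem_orthogonal] at hx
      rw [hx _ (hASu u), map_zero]
    rw [inner_sub_right, sub_eq_zero] at h2
    rw [h1, ← h2]
  have hsub2 : ∀ x ∈ K₁ᗮ, x ∈ LinearMap.range S.adjoint.toFun := by
    intro x hx
    have hmem : B x ∈ S.adjoint.domain :=
      LinearPMap.mem_adjoint_domain_of_exists _ ⟨x, fun u => hBdom x hx u⟩
    have happ : S.adjoint ⟨B x, hmem⟩ = x :=
      LinearPMap.adjoint_apply_eq hdense _ (fun u => hBdom x hx u)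
    exact ⟨⟨B x, hmem⟩, happ⟩
  have hrangeAdj : LinearMap.range S.adjoint.toFun = K₁ᗮ := by
    ext x
    exact ⟨hsub1 x, hsub2 x⟩
  have conclusion2 : IsClosed ((LinearMap.range S.adjoint.toFun : Submodule ℂ H₁) : Set H₁) := by
    rw [hrangeAdj]
    exact K₁.isClosed_orthogonal
  -- B is a right inverse of the adjoint on the range of S
  have hBinv : ∀ v : S.adjoint.domain, ((v : H₂) ∈ Rng) → B (S.adjoint v) = (v : H₂) := by
    intro v hv
    refine ext_inner_right ℂ ?_
    intro y
    obtain ⟨hA1, hA2⟩ := hA0 y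
    obtain ⟨u, hu1, hu2⟩ := hdom ((e.symm (P y) : G))
    rw [← hA1] at hu1
    rw [hA2] at hu2
    have h1 : ⟪B (S.adjoint v), y⟫ = ⟪(S.adjoint v : H₁), A y⟫ :=
      ContinuousLinearMap.adjoint_inner_left A y (S.adjoint v)
    have h2 : ⟪(S.adjoint v : H₁), A y⟫ = ⟪(v : H₂), S u⟫ := by rw [← hu1]; exact hadj v u
    have h3 : ⟪(v : H₂), y - ((P y : H₂))⟫ = 0 := by
      have hmem := Submodule.sub_starProjection_mem_orthogonal (K := Rng) y
      rw [Submodule.mem_orthogonal] at hmem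
      exact hmem _ hv
    rw [inner_sub_right, sub_eq_zero] at h3
    rw [h1, h2, hu2, ← h3]
  -- assembling the block operator
  set R : H₁ × H₂ →L[ℂ] H₁ × H₂ :=
    (-(A.comp (ContinuousLinearMap.snd ℂ H₁ H₂))).prod
      (-(B.comp (ContinuousLinearMap.fst ℂ H₁ H₂))) with hR
  have hRapp : ∀ p : H₁ × H₂, R p = (-(A p.2), -(B p.1)) := fun p => rfl
  have hRc : IsCompactOperator ⇑R := by
    have heq : ⇑R = ((fun x : H₁ => ((-x, 0) : H₁ × H₂)) ∘
        (⇑A ∘ ⇑(ContinuousLinearMap.snd ℂ H₁ H₂))) +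
        ((fun z : H₂ => ((0, -z) : H₁ × H₂)) ∘
        (⇑B ∘ ⇑(ContinuousLinearMap.fst ℂ H₁ H₂))) := by
      funext p
      rw [hRapp]
      simp [Prod.ext_iff]
    rw [heq]
    refine IsCompactOperator.add ?_ ?_
    · exact (hAc.comp_clm _).continuous_comp (continuous_neg.prodMk continuous_const)
    · exact (hBc.comp_clm _).continuous_comp (continuous_const.prodMk continuous_neg)
  refine ⟨conclusion1, conclusion2, R, hRc, ?_⟩
  intro u v hu hv
  have h1 : A (S u) = (u : H₁) := hAinv u (hsub1 _ hu)
  have h2 : B (S.adjoint v) = (v : H₂) := hBinv v (by rw [← hrangeS]; exact hv)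
  rw [hRapp]
  simp only [map_neg, neg_neg]
  rw [h1, h2]

end GBOCIAuxiliary

/-- Abstract form of Proposition on compact resolvents. Let
`S = ∇_M : W^{1,2}(M,ω₀) ⊂ L²(M,ω₀) → L²(TM,ω₀)` be a closed densely defined operator
(`H₁ = L²(M,ω₀)`, `H₂ = L²(TM,ω₀)`) and `div_{M,ω₀} = −S*`. If `S` has a compact left
Fredholm inverse (compact `T` with `T S = I + F`, `F` finite rank), then
`D₀ = [[0, div],[−∇, 0]]`, i.e. `D₀(u,v) = (−S*v, −Su)`, has closed range
`H = Ran(div) ⊕ Ran(∇)`, and the restriction of `D₀` to `H` has a compact inverse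
`D₀⁻¹ : H → H`. -/
theorem gradient_block_operator_compact_inverse
    {H₁ H₂ : Type*} [NormedAddCommGroup H₁] [InnerProductSpace ℂ H₁] [CompleteSpace H₁]
    [NormedAddCommGroup H₂] [InnerProductSpace ℂ H₂] [CompleteSpace H₂]
    (S : H₁ →ₗ.[ℂ] H₂)
    (hdense : Dense (S.domain : Set H₁))
    (hclosed : IsClosed (S.graph : Set (H₁ × H₂)))
    (hLF : ∃ (T : H₂ →L[ℂ] H₁) (F : H₁ →L[ℂ] H₁), IsCompactOperator (⇑T) ∧
      FiniteDimensional ℂ (LinearMap.range (F : H₁ →ₗ[ℂ] H₁)) ∧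
      ∀ x : S.domain, T (S x) = (x : H₁) + F x) :
    IsClosed ((LinearMap.range S.toFun : Submodule ℂ H₂) : Set H₂) ∧
    IsClosed ((LinearMap.range (S.adjoint).toFun : Submodule ℂ H₁) : Set H₁) ∧
    ∃ R : H₁ × H₂ →L[ℂ] H₁ × H₂, IsCompactOperator (⇑R) ∧
      ∀ (u : S.domain) (v : (S.adjoint).domain),
        (u : H₁) ∈ LinearMap.range (S.adjoint).toFun →
        (v : H₂) ∈ LinearMap.range S.toFun →
        R (-(S.adjoint v), -(S u)) = ((u : H₁), (v : H₂)) := by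
  obtain ⟨T, F, hTc, hFfd, hTS⟩ := hLF
  haveI : CompleteSpace (GBOCIAux.Gr S) := (GBOCIAux.isClosed_Gr S hclosed).completeSpace_coe
  exact core_gboci S hdense (GBOCIAux.p1 S) (GBOCIAux.p2 S) (GBOCIAux.inner_Gr S)
    (GBOCIAux.norm_Gr S) (GBOCIAux.exists_dom S) (GBOCIAux.exists_mk S) T F hTc hFfd hTS
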